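/- arXiv:2101.01075 — 2 statements merged into one kernel-verified Lean document; each statement's English description precedes it below -/
import Mathlib

section
/- Let V be a finite-dimensional ℚ-vector space and T : V → V a semisimple linear endomorphism. Then the induced endomorphism Λ²T on the exterior square Λ²V is semisimple. -/
open ExteriorAlgebra TensorProduct

open Polynomial in
/-- Semisimplicity of endomorphisms transfers along surjective intertwining maps. -/
private lemma aux_surj_semisimple {K M N : Type*} [Field K] [AddCommGroup M] [Module K M]
    [AddCommGroup N] [Module K N] {f : Module.End K M} {g : Module.End K N}
    (π : M →ₗ[K] N) (hsurj : Function.Surjective π)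
    (hcomm : ∀ m, π (f m) = g (π m)) (hf : f.IsSemisimple) : g.IsSemisimple := by
  rw [Module.End.IsSemisimple] at hf ⊢
  haveI := hf
  let Pp : Module.AEval' f →ₗ[K[X]] Module.AEval' g :=
    LinearMap.ofAEval f ((Module.AEval'.of g).toLinearMap ∘ₗ π) (fun m => by
      show Module.AEval'.of g (π (f • m)) = (Polynomial.X : K[X]) • Module.AEval'.of g (π m)
      rw [Module.AEval'.X_smul_of, Module.End.smul_def, hcomm])
  have hr : LinearMap.range Pp = ⊤ := by
    rw [LinearMap.range_eq_top]
    intro y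
    obtain ⟨x, hx⟩ := hsurj ((Module.AEval'.of g).symm y)
    refine ⟨Module.AEval'.of f x, ?_⟩
    show (Module.AEval'.of g) (π ((Module.AEval'.of f).symm (Module.AEval'.of f x))) = y
    simp [hx]
  haveI : IsSemisimpleModule K[X] (LinearMap.range Pp) := IsSemisimpleModule.range Pp
  exact IsSemisimpleModule.congr (LinearEquiv.ofTop _ hr).symm

/-- If `T` is a semisimple endomorphism of a finite-dimensional `ℚ`-vector space, then the
induced endomorphism `Λ²T` of the exterior square `⋀[ℚ]^2 V` (i.e. the restriction of
`ExteriorAlgebra.map T` to the second exterior power) is semisimple. -/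
theorem stmt_5 (V : Type*) [AddCommGroup V] [Module ℚ V] [FiniteDimensional ℚ V]
    (T : Module.End ℚ V) (hT : Squarefree (minpoly ℚ T))
    (S : Module.End ℚ (⋀[ℚ]^2 V))
    (hS : ∀ x : ⋀[ℚ]^2 V,
      (S x : ExteriorAlgebra ℚ V) = ExteriorAlgebra.map T (x : ExteriorAlgebra ℚ V)) :
    Squarefree (minpoly ℚ S) := by
  -- T is semisimple
  have hTss : T.IsSemisimple :=
    Module.End.isSemisimple_of_squarefree_aeval_eq_zero hT (minpoly.aeval ℚ T)
  -- T ⊗ 1 and 1 ⊗ T are semisimple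
  set A : Module.End ℚ (V ⊗[ℚ] V) := LinearMap.rTensor V T with hA
  set B : Module.End ℚ (V ⊗[ℚ] V) := LinearMap.lTensor V T with hB
  let φ₁ : Module.End ℚ V →ₐ[ℚ] Module.End ℚ (V ⊗[ℚ] V) :=
    (Module.endTensorEndAlgHom (R := ℚ) (S := ℚ) (A := ℚ)
      (M := V) (N := V)).comp (Algebra.TensorProduct.includeLeft (S := ℚ))
  let φ₂ : Module.End ℚ V →ₐ[ℚ] Module.End ℚ (V ⊗[ℚ] V) :=
    (Module.endTensorEndAlgHom (R := ℚ) (S := ℚ) (A := ℚ)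
      (M := V) (N := V)).comp (Algebra.TensorProduct.includeRight)
  have hφ₁ : φ₁ T = A := by
    show Module.endTensorEndAlgHom (R := ℚ) (S := ℚ) (A := ℚ) (M := V) (N := V)
      (T ⊗ₜ[ℚ] 1) = A
    rw [Module.endTensorEndAlgHom_apply]
    rfl
  have hφ₂ : φ₂ T = B := by
    show Module.endTensorEndAlgHom (R := ℚ) (S := ℚ) (A := ℚ) (M := V) (N := V)
      ((1 : Module.End ℚ V) ⊗ₜ[ℚ] T) = B
    rw [Module.endTensorEndAlgHom_apply]
    rfl
  have hAss : A.IsSemisimple := by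
    refine Module.End.isSemisimple_of_squarefree_aeval_eq_zero hT ?_
    rw [← hφ₁, Polynomial.aeval_algHom_apply, minpoly.aeval, map_zero]
  have hBss : B.IsSemisimple := by
    refine Module.End.isSemisimple_of_squarefree_aeval_eq_zero hT ?_
    rw [← hφ₂, Polynomial.aeval_algHom_apply, minpoly.aeval, map_zero]
  have hcomm : Commute A B := by
    show A * B = B * A
    ext x y
    simp [hA, hB]
  -- T ⊗ T is semisimple
  have hmem : A * B ∈ Algebra.adjoin ℚ {A, B} :=
    mul_mem (Algebra.subset_adjoin (by simp)) (Algebra.subset_adjoin (by simp))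
  have hABss : (A * B).IsSemisimple :=
    Module.End.IsSemisimple.of_mem_adjoin_pair hcomm hAss hBss hmem
  have hABeq : ∀ x y : V, (A * B) (x ⊗ₜ[ℚ] y) = (T x) ⊗ₜ[ℚ] (T y) := by
    intro x y; simp [hA, hB]
  -- the multiplication map V ⊗ V → ExteriorAlgebra
  let μ : V ⊗[ℚ] V →ₗ[ℚ] ExteriorAlgebra ℚ V :=
    TensorProduct.lift (((LinearMap.mul ℚ (ExteriorAlgebra ℚ V)).compl₁₂
      (ExteriorAlgebra.ι ℚ) (ExteriorAlgebra.ι ℚ)))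
  have hμ : ∀ x y : V, μ (x ⊗ₜ[ℚ] y) = ExteriorAlgebra.ι ℚ x * ExteriorAlgebra.ι ℚ y := by
    intro x y; rfl
  have h2 : (⋀[ℚ]^2 V) = LinearMap.range (ExteriorAlgebra.ι ℚ (M := V)) *
      LinearMap.range (ExteriorAlgebra.ι ℚ (M := V)) := pow_two _
  have hrange : ∀ z : V ⊗[ℚ] V, μ z ∈ ⋀[ℚ]^2 V := by
    intro z
    induction z with
    | zero => simp
    | tmul x y =>
        rw [hμ, h2]
        exact Submodule.mul_mem_mul (LinearMap.mem_range_self _ x)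
          (LinearMap.mem_range_self _ y)
    | add x y hx hy => rw [map_add]; exact Submodule.add_mem _ hx hy
  let π : V ⊗[ℚ] V →ₗ[ℚ] (⋀[ℚ]^2 V) := μ.codRestrict _ hrange
  have hπ : ∀ z, ((π z : ⋀[ℚ]^2 V) : ExteriorAlgebra ℚ V) = μ z := fun z => rfl
  have hsurj : Function.Surjective π := by
    rintro ⟨w, hw⟩
    have hw2 : w ∈ LinearMap.range (ExteriorAlgebra.ι ℚ (M := V)) *
        LinearMap.range (ExteriorAlgebra.ι ℚ (M := V)) := by
      rw [← h2]; exact hw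
    have : ∃ z : V ⊗[ℚ] V, μ z = w := by
      refine Submodule.mul_induction_on hw2 ?_ ?_
      · rintro a ⟨x, rfl⟩ b ⟨u, rfl⟩
        exact ⟨x ⊗ₜ[ℚ] u, rfl⟩
      · rintro a b ⟨za, hza⟩ ⟨zb, hzb⟩
        exact ⟨za + zb, by rw [map_add, hza, hzb]⟩
    obtain ⟨z, hz⟩ := this
    exact ⟨z, Subtype.ext (by rw [hπ, hz])⟩
  -- finite dimensionality of the exterior square
  haveI : Module.Finite ℚ (⋀[ℚ]^2 V) := Module.Finite.of_surjective π hsurj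
  -- the intertwining relation
  have hint : ∀ z, π ((A * B) z) = S (π z) := by
    intro z
    apply Subtype.ext
    rw [hπ, hS, hπ]
    induction z with
    | zero => simp
    | tmul x y =>
        rw [hABeq, hμ, hμ, map_mul, ExteriorAlgebra.map_apply_ι, ExteriorAlgebra.map_apply_ι]
    | add x y hx hy => simp only [map_add, hx, hy]
  have hSss : S.IsSemisimple := aux_surj_semisimple π hsurj hint hABss
  exact hSss.minpoly_squarefree
end

section
/- Let V be a finite-dimensional ℂ-vector space with a real structure (i.e., V = W ⊗_ℝ ℂ for a real vector space W with conjugation v ↦ v̄). Suppose F^• is a decreasing filtration of V by complex subspaces such that for some integer k and all r, F^r V ⊕ conj(F^{k-r+1} V) = V. Define V^{p,q} = F^p V ∩ conj(F^q V) for p + q = k. Then V = ⊕_{p+q=k} V^{p,q} and conj(V^{p,q}) = V^{q,p}. -/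
/-- Hodge filtration vs Hodge decomposition: if `V` is a finite-dimensional complex vector
space with a real structure (given by an antilinear involution `σ`), and `F` is a finite
decreasing filtration satisfying the weight-`k` opposedness condition
`F^r ⊕ conj(F^(k-r+1)) = V`, then setting `V^(p,q) = F^p ∩ conj(F^q)` for `p + q = k`,
one has `V = ⊕_(p+q=k) V^(p,q)` and `conj(V^(p,q)) = V^(q,p)`. -/
theorem stmt_8 (V : Type*) [AddCommGroup V] [Module ℂ V] [FiniteDimensional ℂ V]
    (σ : V →ₛₗ[starRingEnd ℂ] V) (hσ : ∀ v, σ (σ v) = v)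
    (F : ℤ → Submodule ℂ V) (hdec : ∀ r : ℤ, F (r + 1) ≤ F r) (k : ℤ)
    (hfull : ∃ a : ℤ, ∀ r ≤ a, F r = ⊤) (hzero : ∃ b : ℤ, ∀ r ≥ b, F r = ⊥)
    (hopp : ∀ r : ℤ, IsCompl (F r) (Submodule.comap σ (F (k - r + 1)))) :
    DirectSum.IsInternal (fun p : ℤ => F p ⊓ Submodule.comap σ (F (k - p))) ∧
    ∀ p : ℤ, Submodule.comap σ (F (k - p) ⊓ Submodule.comap σ (F p)) =
      F p ⊓ Submodule.comap σ (F (k - p)) := by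
  classical
  obtain ⟨a, ha⟩ := hfull
  obtain ⟨b, hb⟩ := hzero
  have hmono : Antitone F := antitone_int_of_succ_le hdec
  set G : ℤ → Submodule ℂ V := fun p => F p ⊓ Submodule.comap σ (F (k - p)) with hG
  -- disjointness / codisjointness from opposedness
  have hdisj : ∀ r : ℤ, ∀ x : V, x ∈ F r → σ x ∈ F (k - r + 1) → x = 0 := by
    intro r x hx hx'
    have := (hopp r).disjoint
    rw [Submodule.disjoint_def] at this
    exact this x hx hx'
  -- key step : F p ≤ F (p+1) ⊔ G p
  have step1 : ∀ p : ℤ, F p ≤ F (p + 1) ⊔ G p := by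
    intro p x hx
    have hx' : x ∈ F (p + 1) ⊔ Submodule.comap σ (F (k - (p + 1) + 1)) := by
      rw [(hopp (p + 1)).sup_eq_top]; trivial
    obtain ⟨y, hy, z, hz, rfl⟩ := Submodule.mem_sup.1 hx'
    have hzp : z ∈ F p := by
      have : (y + z) - y ∈ F p := Submodule.sub_mem _ hx (hdec p hy)
      simpa using this
    have hzG : z ∈ G p := by
      refine ⟨hzp, ?_⟩
      have : k - (p + 1) + 1 = k - p := by ring
      rw [this] at hz
      exact hz
    exact Submodule.add_mem_sup hy hzG
  -- independence
  have hindep : iSupIndep G := by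
    intro p
    have hle : (⨆ (q : ℤ) (_ : q ≠ p), G q) ≤
        F (p + 1) ⊔ Submodule.comap σ (F (k - p + 1)) := by
      refine iSup₂_le fun q hq => ?_
      rcases lt_or_gt_of_ne hq with h | h
      · -- q < p : G q ≤ comap σ (F (k - q)) ≤ comap σ (F (k - p + 1))
        refine le_trans inf_le_right (le_trans ?_ le_sup_right)
        exact Submodule.comap_mono (hmono (by omega))
      · -- q > p : G q ≤ F q ≤ F (p+1)
        exact le_trans inf_le_left (le_trans (hmono (by omega)) le_sup_left)
    refine Disjoint.mono_right hle ?_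
    rw [Submodule.disjoint_def]
    rintro x ⟨hx1, hx2⟩ hx'
    obtain ⟨y, hy, z, hz, rfl⟩ := Submodule.mem_sup.1 hx'
    have hzp : z ∈ F p := by
      have : (y + z) - y ∈ F p := Submodule.sub_mem _ hx1 (hdec p hy)
      simpa using this
    have hz0 : z = 0 := hdisj p z hzp hz
    subst hz0
    have hy2 : σ y ∈ F (k - (p + 1) + 1) := by
      have : k - (p + 1) + 1 = k - p := by ring
      rw [this]
      simpa using hx2
    have : y = 0 := hdisj (p + 1) y hy hy2
    simp [this]
  -- supremum is everything
  have hsup : (⨆ p, G p) = ⊤ := by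
    have key : ∀ n : ℕ, F (b - n) ≤ ⨆ p, G p := by
      intro n
      induction n with
      | zero => simp [hb b le_rfl]
      | succ n ih =>
        have h1 : F (b - (n + 1 : ℕ)) ≤ F (b - (n + 1 : ℕ) + 1) ⊔ G (b - (n + 1 : ℕ)) :=
          step1 _
        have h2 : b - (n + 1 : ℕ) + 1 = b - n := by push_cast; ring
        rw [h2] at h1
        exact h1.trans (sup_le ih (le_iSup G _))
    have h3 : F (b - ((b - a).toNat : ℤ)) = ⊤ := ha _ (by omega)
    exact top_le_iff.1 (h3 ▸ key (b - a).toNat)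
  constructor
  · exact (DirectSum.isInternal_submodule_iff_iSupIndep_and_iSup_eq_top G).2 ⟨hindep, hsup⟩
  · intro p
    ext x
    simp only [Submodule.mem_comap, Submodule.mem_inf, hσ x]
    exact and_comm
end
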